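/- Let Φ(ρ) = Σ_k A_k ρ A_k† be a quantum channel on 2^m × 2^m complex matrices (Σ_k A_k† A_k = 𝟙, Kraus index set identified with Fin m → Fin 2), with complementary channel Φ^C. Assume: (i) for every diagonal Pauli string Λ ∈ {𝟙,Z}^{⊗m} and every ρ, Φ(ΛρΛ) = ΛΦ(ρ)Λ and Φ^C(ΛρΛ) = ΛΦ^C(ρ)Λ; (ii) the coherent information is concave on density matrices, i.e., for all density matrices ρ, σ and t ∈ [0,1], I_coh(Φ, tρ + (1−t)σ) ≥ t·I_coh(Φ, ρ) + (1−t)·I_coh(Φ, σ). Then the supremum of I_coh(Φ, ρ) over all density matrices ρ equals the supremum of I_coh(Φ, ρ) over all diagonal density matrices ρ. -/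

import Mathlib

open Matrix
open scoped ComplexOrder

/-- `η(t) = −t·log t / log 2` for `t > 0`, and `0` otherwise. -/
noncomputable def eta (t : ℝ) : ℝ := if 0 < t then -t * Real.log t / Real.log 2 else 0

/-- The von Neumann entropy of a (Hermitian) matrix: the sum of `η` over its eigenvalues. -/
noncomputable def vnEntropy {n : Type*} [Fintype n] [DecidableEq n] (ρ : Matrix n n ℂ) : ℝ :=
  if h : ρ.IsHermitian then ∑ i, eta (h.eigenvalues i) else 0

/-- The four Pauli matrices `𝟙, X, Y, Z`. -/
noncomputable def pauli : Fin 4 → Matrix (Fin 2) (Fin 2) ℂ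
  | 0 => !![1, 0; 0, 1]
  | 1 => !![0, 1; 1, 0]
  | 2 => !![0, -Complex.I; Complex.I, 0]
  | 3 => !![1, 0; 0, -1]

/-- The diagonal Pauli string in `{𝟙, Z}^{⊗m}` determined by `t : Fin m → Bool`. -/
noncomputable def diagPauliString {m : ℕ} (t : Fin m → Bool) :
    Matrix (Fin m → Fin 2) (Fin m → Fin 2) ℂ :=
  Matrix.of fun a b => ∏ i, pauli (if t i then 3 else 0) (a i) (b i)

/-- The channel `Φ(ρ) = Σ_k A_k ρ A_k†` determined by a Kraus family. -/
noncomputable def krausChannel {m : ℕ}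
    (A : (Fin m → Fin 2) → Matrix (Fin m → Fin 2) (Fin m → Fin 2) ℂ)
    (ρ : Matrix (Fin m → Fin 2) (Fin m → Fin 2) ℂ) :
    Matrix (Fin m → Fin 2) (Fin m → Fin 2) ℂ :=
  ∑ k, A k * ρ * (A k)ᴴ

/-- The complementary channel `Φ^C(ρ) = [tr(A_j ρ A_k†)]_{j,k}` of a Kraus family. -/
noncomputable def krausComp {m : ℕ}
    (A : (Fin m → Fin 2) → Matrix (Fin m → Fin 2) (Fin m → Fin 2) ℂ)
    (ρ : Matrix (Fin m → Fin 2) (Fin m → Fin 2) ℂ) :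
    Matrix (Fin m → Fin 2) (Fin m → Fin 2) ℂ :=
  Matrix.of fun j k => (A j * ρ * (A k)ᴴ).trace

/-- The coherent information `I_coh(Φ, ρ) = S(Φ(ρ)) − S(Φ^C(ρ))` of a Kraus family. -/
noncomputable def Icoh {m : ℕ}
    (A : (Fin m → Fin 2) → Matrix (Fin m → Fin 2) (Fin m → Fin 2) ℂ)
    (ρ : Matrix (Fin m → Fin 2) (Fin m → Fin 2) ℂ) : ℝ :=
  vnEntropy (krausChannel A ρ) - vnEntropy (krausComp A ρ)

variable {m : ℕ}

/-- The diagonal entries of a diagonal Pauli string. -/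
noncomputable def dSign (t : Fin m → Bool) (a : Fin m → Fin 2) : ℂ :=
  ∏ i, (if t i ∧ a i = 1 then (-1 : ℂ) else 1)

lemma pauli_diag_entry (x : Bool) (u v : Fin 2) :
    pauli (if x then 3 else 0) u v
      = if u = v then (if x ∧ u = 1 then (-1 : ℂ) else 1) else 0 := by
  fin_cases u <;> fin_cases v <;> cases x <;> simp [pauli]

lemma diagPauliString_eq (t : Fin m → Bool) :
    diagPauliString t = Matrix.diagonal (dSign t) := by
  ext a b
  rcases eq_or_ne a b with rfl | hab
  · simp only [diagPauliString, Matrix.of_apply, Matrix.diagonal_apply_eq, dSign]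
    exact Finset.prod_congr rfl fun i _ => by rw [pauli_diag_entry, if_pos rfl]
  · obtain ⟨i, hi⟩ := Function.ne_iff.mp hab
    rw [Matrix.diagonal_apply_ne _ hab]
    simp only [diagPauliString, Matrix.of_apply]
    exact Finset.prod_eq_zero (Finset.mem_univ i) (by rw [pauli_diag_entry, if_neg hi])

lemma dSign_mul_self (t : Fin m → Bool) (a : Fin m → Fin 2) : dSign t a * dSign t a = 1 := by
  rw [dSign, ← Finset.prod_mul_distrib]
  apply Finset.prod_eq_one
  intro i _
  split <;> norm_num

lemma star_dSign (t : Fin m → Bool) (a : Fin m → Fin 2) : star (dSign t a) = dSign t a := by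
  rw [dSign, star_prod]
  exact Finset.prod_congr rfl fun i _ => by split <;> simp

lemma dps_mul_self (t : Fin m → Bool) : diagPauliString t * diagPauliString t = 1 := by
  rw [diagPauliString_eq, diagonal_mul_diagonal, ← diagonal_one]
  exact congrArg _ (funext fun a => dSign_mul_self t a)

lemma dps_herm (t : Fin m → Bool) : (diagPauliString t)ᴴ = diagPauliString t := by
  rw [diagPauliString_eq, diagonal_conjTranspose]
  exact congrArg _ (funext fun a => star_dSign t a)

lemma sum_dSign {a b : Fin m → Fin 2} (hab : a ≠ b) :
    ∑ t : Fin m → Bool, dSign t a * dSign t b = 0 := by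
  classical
  obtain ⟨i₀, hi₀⟩ := Function.ne_iff.mp hab
  set h : Fin m → Bool → ℂ := fun i x =>
    (if x ∧ a i = 1 then (-1 : ℂ) else 1) * (if x ∧ b i = 1 then (-1 : ℂ) else 1) with hh
  have hf : ∀ s : Fin m → Bool, dSign s a * dSign s b = ∏ i, h i (s i) := by
    intro s
    rw [dSign, dSign, ← Finset.prod_mul_distrib]
  have hflip : ∀ c : Bool, h i₀ (!c) = - h i₀ c := by
    have two : ∀ v : Fin 2, v = 0 ∨ v = 1 := by decide
    intro c
    rcases two (a i₀) with h1 | h1 <;> rcases two (b i₀) with h2 | h2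
    · exact absurd (h1.trans h2.symm) hi₀
    · cases c <;> simp [hh, h1, h2]
    · cases c <;> simp [hh, h1, h2]
    · exact absurd (h1.trans h2.symm) hi₀
  have key : ∀ s : Fin m → Bool,
      dSign (Function.update s i₀ (!s i₀)) a * dSign (Function.update s i₀ (!s i₀)) b
        = -(dSign s a * dSign s b) := by
    intro s
    rw [hf, hf]
    have e1 : (fun i => h i (Function.update s i₀ (!s i₀) i))
        = Function.update (fun i => h i (s i)) i₀ (h i₀ (!s i₀)) := by
      funext i
      rcases eq_or_ne i i₀ with rfl | hne
      · simp
      · simp [Function.update_of_ne hne]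
    rw [e1, Finset.prod_update_of_mem (Finset.mem_univ i₀),
      Finset.prod_eq_mul_prod_sdiff_singleton_of_mem (Finset.mem_univ i₀) (fun i => h i (s i)),
      hflip, neg_mul]
  refine Finset.sum_ninvolution (fun s => Function.update s i₀ (!s i₀)) ?_ ?_ ?_ ?_
  · intro s; rw [key]; ring
  · intro s _ hcon
    have := congrFun hcon i₀
    simp at this
  · intro s; exact Finset.mem_univ _
  · intro s
    funext i
    rcases eq_or_ne i i₀ with rfl | hne
    · simp
    · simp [Function.update_of_ne hne]

section Charpoly

variable {n : Type*} [Fintype n] [DecidableEq n]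

lemma charpoly_conj (U M : Matrix n n ℂ) (h1 : U * Uᴴ = 1) :
    (U * M * Uᴴ).charpoly = M.charpoly := by
  have hmap : ∀ (P Q : Matrix n n ℂ), P * Q = 1 →
      (P.map Polynomial.C) * (Q.map Polynomial.C) = 1 := by
    intro P Q hPQ
    rw [← Matrix.map_mul, hPQ]
    exact Matrix.map_one _ (map_zero _) (map_one _)
  have hcm : charmatrix (U * M * Uᴴ)
      = U.map Polynomial.C * charmatrix M * Uᴴ.map Polynomial.C := by
    rw [charmatrix, charmatrix, Matrix.mul_sub, Matrix.sub_mul]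
    congr 1
    · rw [scalar_apply, ← smul_one_eq_diagonal, Matrix.mul_smul, Matrix.smul_mul, mul_one,
        hmap _ _ h1]
    · simp only [RingHom.mapMatrix_apply]
      rw [← Matrix.map_mul, ← Matrix.map_mul]
  rw [Matrix.charpoly, Matrix.charpoly, hcm, det_mul, det_mul, mul_right_comm,
    ← det_mul, hmap _ _ h1, det_one, one_mul]

lemma charpoly_diag (v : n → ℂ) :
    (diagonal v).charpoly = ∏ i, (Polynomial.X - Polynomial.C (v i)) := by
  have hc : charmatrix (diagonal v) = diagonal fun i => Polynomial.X - Polynomial.C (v i) := by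
    ext i j
    rcases eq_or_ne i j with rfl | hij
    · simp
    · rw [charmatrix_apply_ne _ _ _ hij, diagonal_apply_ne _ hij, diagonal_apply_ne _ hij,
        map_zero, neg_zero]
  rw [Matrix.charpoly, hc, det_diagonal]

lemma herm_charpoly {B : Matrix n n ℂ} (hB : B.IsHermitian) :
    B.charpoly = ∏ i, (Polynomial.X - Polynomial.C ((hB.eigenvalues i : ℂ))) := by
  have hU1 : (hB.eigenvectorUnitary : Matrix n n ℂ) * (hB.eigenvectorUnitary : Matrix n n ℂ)ᴴ
      = 1 := by
    rw [← Matrix.star_eq_conjTranspose]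
    exact (Matrix.mem_unitaryGroup_iff).mp hB.eigenvectorUnitary.2
  conv_lhs => rw [hB.spectral_theorem]
  rw [Unitary.conjStarAlgAut_apply, Matrix.star_eq_conjTranspose, charpoly_conj _ _ hU1, charpoly_diag]
  rfl

lemma vnEntropy_eq_of_charpoly {B C : Matrix n n ℂ}
    (hB : B.IsHermitian) (hC : C.IsHermitian) (h : B.charpoly = C.charpoly) :
    vnEntropy B = vnEntropy C := by
  have hr : ∀ (f : n → ℂ), (∏ i, (Polynomial.X - Polynomial.C (f i))).roots
      = Finset.univ.val.map f := by
    intro f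
    rw [Finset.prod_eq_multiset_prod]
    have e : (Multiset.map (fun i => Polynomial.X - Polynomial.C (f i)) Finset.univ.val)
        = Multiset.map (fun a => Polynomial.X - Polynomial.C a) (Finset.univ.val.map f) := by
      rw [Multiset.map_map]; rfl
    rw [e, Polynomial.roots_multiset_prod_X_sub_C]
  have h1 := herm_charpoly hB
  have h2 := herm_charpoly hC
  rw [h, h2] at h1
  have hroots := congrArg Polynomial.roots h1
  rw [hr, hr] at hroots
  have hre := congrArg (Multiset.map Complex.re) hroots
  rw [Multiset.map_map, Multiset.map_map] at hre
  have hmul : Finset.univ.val.map hB.eigenvalues = Finset.univ.val.map hC.eigenvalues := by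
    have e : ∀ (g : n → ℝ), Multiset.map (Complex.re ∘ fun i => ((g i : ℝ) : ℂ)) Finset.univ.val
        = Finset.univ.val.map g := by
      intro g
      apply Multiset.map_congr rfl
      intro i _
      simp
    rw [← e hB.eigenvalues, ← e hC.eigenvalues]
    exact hre.symm
  rw [vnEntropy, vnEntropy, dif_pos hB, dif_pos hC]
  calc ∑ i, eta (hB.eigenvalues i)
      = ((Finset.univ.val.map hB.eigenvalues).map eta).sum := by
        rw [Multiset.map_map]; rfl
    _ = ((Finset.univ.val.map hC.eigenvalues).map eta).sum := by rw [hmul]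
    _ = ∑ i, eta (hC.eigenvalues i) := by rw [Multiset.map_map]; rfl

end Charpoly

lemma herm_conj (t : Fin m → Bool) {X : Matrix (Fin m → Fin 2) (Fin m → Fin 2) ℂ}
    (hX : X.IsHermitian) : (diagPauliString t * X * diagPauliString t).IsHermitian := by
  have : (diagPauliString t * X * (diagPauliString t)ᴴ).IsHermitian := by
    unfold Matrix.IsHermitian
    rw [conjTranspose_mul, conjTranspose_mul, conjTranspose_conjTranspose, hX.eq,
      Matrix.mul_assoc]
  rwa [dps_herm] at this

lemma vnEntropy_conj (t : Fin m → Bool) (X : Matrix (Fin m → Fin 2) (Fin m → Fin 2) ℂ) :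
    vnEntropy (diagPauliString t * X * diagPauliString t) = vnEntropy X := by
  by_cases hX : X.IsHermitian
  · refine vnEntropy_eq_of_charpoly (herm_conj t hX) hX ?_
    conv_lhs => rw [show diagPauliString t * X * diagPauliString t
        = diagPauliString t * X * (diagPauliString t)ᴴ from by rw [dps_herm]]
    exact charpoly_conj _ _ (by rw [dps_herm]; exact dps_mul_self t)
  · have hnc : ¬ (diagPauliString t * X * diagPauliString t).IsHermitian := by
      intro hc
      apply hX
      have hXeq : diagPauliString t * (diagPauliString t * X * diagPauliString t) *
          diagPauliString t = X := by
        have e : diagPauliString t * (diagPauliString t * X * diagPauliString t) *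
            diagPauliString t
            = (diagPauliString t * diagPauliString t) * (X *
              (diagPauliString t * diagPauliString t)) := by
          simp only [Matrix.mul_assoc]
        rw [e, dps_mul_self, one_mul, mul_one]
      rw [← hXeq]
      exact herm_conj t hc
    rw [vnEntropy, vnEntropy, dif_neg hX, dif_neg hnc]

lemma rsmul_eq {n : Type*} [Fintype n] [DecidableEq n] (c : ℝ) (M : Matrix n n ℂ) :
    c • M = (c : ℂ) • M := by
  ext i j
  simp [Matrix.smul_apply, Complex.real_smul]

lemma psd_real_smul {n : Type*} [Fintype n] [DecidableEq n] {M : Matrix n n ℂ}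
    (hM : M.PosSemidef) {c : ℝ} (hc : 0 ≤ c) : ((c : ℂ) • M).PosSemidef := by
  refine ⟨?_, fun x => ?_⟩
  · unfold Matrix.IsHermitian
    rw [conjTranspose_smul, hM.1.eq, Complex.star_def, Complex.conj_ofReal]
  · exact (hM.smul (Complex.zero_le_real.mpr hc)).2 x

/-- For a quantum channel that, together with its complementary channel, is
covariant with respect to all diagonal Pauli strings, and whose coherent information is concave
on density matrices, the supremum of the coherent information over all density matrices equals
its supremum over diagonal density matrices. -/
theorem sup_coherent_information_on_diagonal (m : ℕ)
    (A : (Fin m → Fin 2) → Matrix (Fin m → Fin 2) (Fin m → Fin 2) ℂ)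
    (hTP : ∑ k, (A k)ᴴ * A k = 1)
    (hcov : ∀ (t : Fin m → Bool) (ρ : Matrix (Fin m → Fin 2) (Fin m → Fin 2) ℂ),
      krausChannel A (diagPauliString t * ρ * diagPauliString t)
        = diagPauliString t * krausChannel A ρ * diagPauliString t)
    (hcovC : ∀ (t : Fin m → Bool) (ρ : Matrix (Fin m → Fin 2) (Fin m → Fin 2) ℂ),
      krausComp A (diagPauliString t * ρ * diagPauliString t)
        = diagPauliString t * krausComp A ρ * diagPauliString t)
    (hconc : ∀ (ρ σ : Matrix (Fin m → Fin 2) (Fin m → Fin 2) ℂ),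
      ρ.PosSemidef → ρ.trace = 1 → σ.PosSemidef → σ.trace = 1 →
      ∀ s : ℝ, 0 ≤ s → s ≤ 1 →
        s * Icoh A ρ + (1 - s) * Icoh A σ
          ≤ Icoh A ((s : ℂ) • ρ + ((1 - s : ℝ) : ℂ) • σ)) :
    sSup {r : ℝ | ∃ ρ : Matrix (Fin m → Fin 2) (Fin m → Fin 2) ℂ,
        ρ.PosSemidef ∧ ρ.trace = 1 ∧ r = Icoh A ρ}
      = sSup {r : ℝ | ∃ ρ : Matrix (Fin m → Fin 2) (Fin m → Fin 2) ℂ,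
        ρ.PosSemidef ∧ ρ.trace = 1 ∧ (∀ a b, a ≠ b → ρ a b = 0) ∧ r = Icoh A ρ} := by
  classical
  have key : ∀ ρ : Matrix (Fin m → Fin 2) (Fin m → Fin 2) ℂ, ρ.PosSemidef → ρ.trace = 1 →
      ∃ σ : Matrix (Fin m → Fin 2) (Fin m → Fin 2) ℂ, σ.PosSemidef ∧ σ.trace = 1 ∧
        (∀ a b, a ≠ b → σ a b = 0) ∧ Icoh A ρ ≤ Icoh A σ := by
    intro ρ hρ hρtr
    set n2 := Fintype.card (Fin m → Bool) with hn2
    have hn2pos : (0 : ℝ) < (n2 : ℝ) := by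
      have : 0 < n2 := Fintype.card_pos
      exact_mod_cast this
    set w : (Fin m → Bool) → ℝ := fun _ => (n2 : ℝ)⁻¹ with hw
    have hw0 : ∀ t ∈ Finset.univ, (0:ℝ) ≤ w t := fun t _ => by
      simp only [hw]
      positivity
    have hw1 : ∑ t : Fin m → Bool, w t = 1 := by
      simp only [hw, Finset.sum_const, Finset.card_univ, nsmul_eq_mul, ← hn2]
      exact mul_inv_cancel₀ (ne_of_gt hn2pos)
    set p : (Fin m → Bool) → Matrix (Fin m → Fin 2) (Fin m → Fin 2) ℂ :=
      fun t => diagPauliString t * ρ * diagPauliString t with hp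
    have hppsd : ∀ t, (p t).PosSemidef := fun t => by
      have := hρ.mul_mul_conjTranspose_same (diagPauliString t)
      rwa [dps_herm] at this
    have hptr : ∀ t, (p t).trace = 1 := fun t => by
      simp only [hp]
      rw [Matrix.trace_mul_cycle, dps_mul_self, one_mul, hρtr]
    set S : Set (Matrix (Fin m → Fin 2) (Fin m → Fin 2) ℂ) :=
      {σ | σ.PosSemidef ∧ σ.trace = 1} with hS
    have hconv : Convex ℝ S := by
      rintro x ⟨hx1, hx2⟩ y ⟨hy1, hy2⟩ a b ha hb hab
      refine ⟨?_, ?_⟩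
      · rw [rsmul_eq, rsmul_eq]
        exact (psd_real_smul hx1 ha).add (psd_real_smul hy1 hb)
      · rw [trace_add, rsmul_eq, rsmul_eq, trace_smul, trace_smul, hx2, hy2, smul_eq_mul,
          smul_eq_mul, mul_one, mul_one]
        exact_mod_cast congrArg (fun r : ℝ => (r : ℂ)) hab
    have hcc : ConcaveOn ℝ S (Icoh A) := by
      refine ⟨hconv, ?_⟩
      intro x hx y hy a b ha hb hab
      have hb' : b = 1 - a := by linarith
      subst hb'
      have h := hconc x y hx.1 hx.2 hy.1 hy.2 a ha (by linarith)
      calc a • Icoh A x + (1 - a) • Icoh A y = a * Icoh A x + (1 - a) * Icoh A y := rfl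
        _ ≤ Icoh A ((a : ℂ) • x + ((1 - a : ℝ) : ℂ) • y) := h
        _ = Icoh A (a • x + (1 - a) • y) := by rw [rsmul_eq a, rsmul_eq (1 - a)]
    have hmem : ∀ t ∈ Finset.univ, p t ∈ S := fun t _ => ⟨hppsd t, hptr t⟩
    set σ := ∑ t : Fin m → Bool, w t • p t with hσ
    have jensen := hcc.le_map_sum hw0 hw1 hmem
    have hσS : σ ∈ S := hconv.sum_mem hw0 hw1 hmem
    have hIp : ∀ t, Icoh A (p t) = Icoh A ρ := by
      intro t
      simp only [hp]
      rw [Icoh, Icoh, hcov, hcovC, vnEntropy_conj, vnEntropy_conj]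
    have hL : ∑ t : Fin m → Bool, w t • Icoh A (p t) = Icoh A ρ := by
      calc ∑ t : Fin m → Bool, w t • Icoh A (p t)
          = ∑ _t : Fin m → Bool, (n2 : ℝ)⁻¹ * Icoh A ρ := by
            apply Finset.sum_congr rfl
            intro t _
            rw [hIp t, smul_eq_mul, hw]
        _ = Icoh A ρ := by
            rw [Finset.sum_const, Finset.card_univ, nsmul_eq_mul, ← hn2, ← mul_assoc,
              mul_inv_cancel₀ (ne_of_gt hn2pos), one_mul]
    have hdiag : ∀ a b, a ≠ b → σ a b = 0 := by
      intro a b hab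
      have hσab : σ a b = ∑ t : Fin m → Bool, ((w t : ℝ) : ℂ)
          * (dSign t a * ρ a b * dSign t b) := by
        rw [hσ, Matrix.sum_apply]
        apply Finset.sum_congr rfl
        intro t _
        rw [Matrix.smul_apply, hp]
        simp only [diagPauliString_eq]
        rw [Matrix.mul_diagonal, Matrix.diagonal_mul, Complex.real_smul]
      rw [hσab]
      have e : ∀ t : Fin m → Bool, ((w t : ℝ) : ℂ) * (dSign t a * ρ a b * dSign t b)
          = ((((n2 : ℝ)⁻¹ : ℝ) : ℂ) * ρ a b) * (dSign t a * dSign t b) := by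
        intro t
        simp only [hw]
        ring
      rw [Finset.sum_congr rfl (fun t _ => e t), ← Finset.mul_sum, sum_dSign hab, mul_zero]
    refine ⟨σ, hσS.1, hσS.2, hdiag, ?_⟩
    rw [← hL, hσ]
    exact jensen
  apply csSup_eq_csSup_of_forall_exists_le
  · rintro x ⟨ρ, h1, h2, rfl⟩
    obtain ⟨σ, hs1, hs2, hs3, hle⟩ := key ρ h1 h2
    exact ⟨Icoh A σ, ⟨σ, hs1, hs2, hs3, rfl⟩, hle⟩
  · rintro y ⟨ρ, h1, h2, _, rfl⟩
    exact ⟨Icoh A ρ, ⟨ρ, h1, h2, rfl⟩, le_rfl⟩
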